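/- Let U ∈ ℝ^{N×n} have orthonormal columns, and suppose Â = UᵀAU ∈ ℝ^{n×n} and B̂B̂ᵀ ∈ ℝ^{n×n} are both diagonal, where B̂ = UᵀB. Let D̂ ∈ ℝ^{n×n} be the unique solution of min ‖Ĉ - Â·D·B̂‖² subject to Dᵀ = ±D, with Ĉ = UᵀC. Then for any n' < n, the top-left n'×n' submatrix D̂' of D̂ is the unique solution of the corresponding constrained problem min ‖Ĉ' - Â'·D·B̂'‖² subject to Dᵀ = ±D over D ∈ ℝ^{n'×n'}, where Â', B̂', Ĉ' are formed by removing the last n - n' columns of U in every multiplication. -/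

import Mathlib

open Matrix

/-- Squared Frobenius norm. -/
def frob2 {m n : ℕ} (M : Matrix (Fin m) (Fin n) ℝ) : ℝ := ∑ i, ∑ j, (M i j) ^ 2

lemma sum_castLE {n n' : ℕ} (hle : n' ≤ n) (g : Fin n → ℝ) :
    ∑ i : Fin n, (if (i : ℕ) < n' then g i else 0) = ∑ i : Fin n', g (Fin.castLE hle i) := by
  rw [← Finset.sum_filter]
  rw [show (Finset.univ.filter (fun i : Fin n => (i:ℕ) < n')) =
      Finset.univ.map (Fin.castLEEmb hle) from ?_]
  · rw [Finset.sum_map]; rfl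
  · ext i
    simp only [Finset.mem_filter, Finset.mem_univ, true_and, Finset.mem_map]
    constructor
    · intro hi; exact ⟨⟨i, hi⟩, by simp⟩
    · rintro ⟨j, rfl⟩; exact j.2

lemma sum_diff_block {n n' : ℕ} (hle : n' ≤ n) (F₁ F₂ : Fin n → Fin n → ℝ)
    (hoff : ∀ i j : Fin n, ¬((i : ℕ) < n' ∧ (j : ℕ) < n') → F₁ i j = F₂ i j) :
    (∑ i, ∑ j, F₁ i j) - (∑ i, ∑ j, F₂ i j) =
      ∑ i : Fin n', ∑ j : Fin n',
        (F₁ (Fin.castLE hle i) (Fin.castLE hle j) - F₂ (Fin.castLE hle i) (Fin.castLE hle j)) := by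
  have h1 : (∑ i, ∑ j, F₁ i j) - (∑ i, ∑ j, F₂ i j) = ∑ i, ∑ j, (F₁ i j - F₂ i j) := by
    rw [← Finset.sum_sub_distrib]
    exact Finset.sum_congr rfl fun i _ => (Finset.sum_sub_distrib _ _).symm
  rw [h1]
  have h2 : ∀ i : Fin n, ∑ j, (F₁ i j - F₂ i j) =
      if (i : ℕ) < n' then ∑ j : Fin n, (if (j : ℕ) < n' then F₁ i j - F₂ i j else 0) else 0 := by
    intro i
    by_cases hi : (i : ℕ) < n'
    · rw [if_pos hi]
      refine Finset.sum_congr rfl fun j _ => ?_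
      by_cases hj : (j : ℕ) < n'
      · rw [if_pos hj]
      · rw [if_neg hj, hoff i j (fun h => hj h.2), sub_self]
    · rw [if_neg hi]
      refine Finset.sum_eq_zero fun j _ => ?_
      rw [hoff i j (fun h => hi h.1), sub_self]
  rw [Finset.sum_congr rfl fun i _ => h2 i, sum_castLE hle]
  exact Finset.sum_congr rfl fun i _ => sum_castLE hle _

lemma expand_frob {p q : ℕ} (Ah : Matrix (Fin p) (Fin p) ℝ) (hAh : Ah.IsDiag)
    (Bh : Matrix (Fin p) (Fin q) ℝ) (hBh : (Bh * Bhᵀ).IsDiag)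
    (Ch : Matrix (Fin p) (Fin q) ℝ) (D : Matrix (Fin p) (Fin p) ℝ) :
    frob2 (Ch - Ah * D * Bh) = frob2 Ch +
      ∑ i, ∑ j, ((Ah i i) ^ 2 * (Bh * Bhᵀ) j j * (D i j) ^ 2
        - 2 * Ah i i * (Ch * Bhᵀ) i j * D i j) := by
  have hAD : ∀ i j, (Ah * D) i j = Ah i i * D i j := by
    intro i j
    rw [Matrix.mul_apply]
    rw [Finset.sum_eq_single i (fun l _ hl => by rw [hAh (Ne.symm hl), zero_mul])
      (fun h => absurd (Finset.mem_univ i) h)]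
  unfold frob2
  rw [← Finset.sum_add_distrib]
  refine Finset.sum_congr rfl fun i _ => ?_
  have key : ∀ k, ((Ch - Ah * D * Bh) i k) = Ch i k - ∑ j, Ah i i * D i j * Bh j k := by
    intro k
    rw [Matrix.sub_apply, Matrix.mul_apply]
    congr 1
    exact Finset.sum_congr rfl fun j _ => by rw [hAD]
  have hmid : ∑ k, (Ch i k * ∑ j, Ah i i * D i j * Bh j k)
      = ∑ j, Ah i i * (Ch * Bhᵀ) i j * D i j := by
    calc ∑ k, (Ch i k * ∑ j, Ah i i * D i j * Bh j k)
        = ∑ k, ∑ j, Ch i k * (Ah i i * D i j * Bh j k) := by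
          exact Finset.sum_congr rfl fun k _ => Finset.mul_sum _ _ _
      _ = ∑ j, ∑ k, Ch i k * (Ah i i * D i j * Bh j k) := Finset.sum_comm
      _ = ∑ j, Ah i i * (Ch * Bhᵀ) i j * D i j := by
          refine Finset.sum_congr rfl fun j _ => ?_
          simp only [Matrix.mul_apply, Matrix.transpose_apply, Finset.mul_sum, Finset.sum_mul]
          refine Finset.sum_congr rfl fun k _ => ?_
          ring
  have hlast : ∑ k, (∑ j, Ah i i * D i j * Bh j k) ^ 2
      = ∑ j, (Ah i i) ^ 2 * (Bh * Bhᵀ) j j * (D i j) ^ 2 := by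
    calc ∑ k, (∑ j, Ah i i * D i j * Bh j k) ^ 2
        = ∑ k, ∑ j, ∑ j', (Ah i i * D i j * Bh j k) * (Ah i i * D i j' * Bh j' k) := by
          refine Finset.sum_congr rfl fun k _ => ?_
          rw [sq, Finset.sum_mul_sum]
      _ = ∑ j, ∑ j', ∑ k, (Ah i i * D i j * Bh j k) * (Ah i i * D i j' * Bh j' k) := by
          rw [Finset.sum_comm]
          exact Finset.sum_congr rfl fun j _ => Finset.sum_comm
      _ = ∑ j, ∑ j', (Ah i i * D i j) * (Ah i i * D i j') * (Bh * Bhᵀ) j j' := by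
          refine Finset.sum_congr rfl fun j _ => Finset.sum_congr rfl fun j' _ => ?_
          rw [Matrix.mul_apply, Finset.mul_sum]
          refine Finset.sum_congr rfl fun k _ => ?_
          rw [Matrix.transpose_apply]; ring
      _ = ∑ j, (Ah i i) ^ 2 * (Bh * Bhᵀ) j j * (D i j) ^ 2 := by
          refine Finset.sum_congr rfl fun j _ => ?_
          rw [Finset.sum_eq_single j (fun j' _ hj' => by rw [hBh hj'.symm, mul_zero])
            (fun h => absurd (Finset.mem_univ j) h)]
          ring
  calc ∑ k, ((Ch - Ah * D * Bh) i k) ^ 2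
      = ∑ k, ((Ch i k) ^ 2 - 2 * (Ch i k * ∑ j, Ah i i * D i j * Bh j k)
          + (∑ j, Ah i i * D i j * Bh j k) ^ 2) := by
        refine Finset.sum_congr rfl fun k _ => ?_
        rw [key k]; ring
    _ = ∑ k, (Ch i k) ^ 2 - 2 * ∑ k, (Ch i k * ∑ j, Ah i i * D i j * Bh j k)
          + ∑ k, (∑ j, Ah i i * D i j * Bh j k) ^ 2 := by
        rw [Finset.sum_add_distrib, Finset.sum_sub_distrib, Finset.mul_sum]
    _ = ∑ k, (Ch i k) ^ 2 +
        ∑ j, ((Ah i i) ^ 2 * (Bh * Bhᵀ) j j * (D i j) ^ 2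
          - 2 * Ah i i * (Ch * Bhᵀ) i j * D i j) := by
        rw [hmid, hlast, Finset.sum_sub_distrib, Finset.mul_sum]
        have hco : (∑ x, 2 * (Ah i i * (Ch * Bhᵀ) i x * D i x))
            = ∑ x, 2 * Ah i i * (Ch * Bhᵀ) i x * D i x :=
          Finset.sum_congr rfl fun x _ => by ring
        rw [hco]
        ring

theorem constrained_opinf_truncation {N n ns n' : ℕ} (hn' : n' < n)
    (U : Matrix (Fin N) (Fin n) ℝ) (hU : Uᵀ * U = 1)
    (A : Matrix (Fin N) (Fin N) ℝ) (B C : Matrix (Fin N) (Fin ns) ℝ)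
    (ε : ℝ) (hε : ε = 1 ∨ ε = -1)
    (hAdiag : (Uᵀ * A * U).IsDiag) (hBdiag : ((Uᵀ * B) * (Uᵀ * B)ᵀ).IsDiag)
    (Dh : Matrix (Fin n) (Fin n) ℝ) (hDsym : Dhᵀ = ε • Dh)
    (hDmin : ∀ D : Matrix (Fin n) (Fin n) ℝ, Dᵀ = ε • D →
      frob2 (Uᵀ * C - (Uᵀ * A * U) * Dh * (Uᵀ * B)) ≤
        frob2 (Uᵀ * C - (Uᵀ * A * U) * D * (Uᵀ * B)))
    (hDuniq : ∀ D : Matrix (Fin n) (Fin n) ℝ, Dᵀ = ε • D →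
      (∀ D' : Matrix (Fin n) (Fin n) ℝ, D'ᵀ = ε • D' →
        frob2 (Uᵀ * C - (Uᵀ * A * U) * D * (Uᵀ * B)) ≤
          frob2 (Uᵀ * C - (Uᵀ * A * U) * D' * (Uᵀ * B))) → D = Dh) :
    (Dh.submatrix (Fin.castLE hn'.le) (Fin.castLE hn'.le))ᵀ =
        ε • Dh.submatrix (Fin.castLE hn'.le) (Fin.castLE hn'.le) ∧
    (∀ D : Matrix (Fin n') (Fin n') ℝ, Dᵀ = ε • D →
      frob2 ((U.submatrix id (Fin.castLE hn'.le))ᵀ * C -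
          ((U.submatrix id (Fin.castLE hn'.le))ᵀ * A * U.submatrix id (Fin.castLE hn'.le)) *
            Dh.submatrix (Fin.castLE hn'.le) (Fin.castLE hn'.le) *
            ((U.submatrix id (Fin.castLE hn'.le))ᵀ * B)) ≤
        frob2 ((U.submatrix id (Fin.castLE hn'.le))ᵀ * C -
          ((U.submatrix id (Fin.castLE hn'.le))ᵀ * A * U.submatrix id (Fin.castLE hn'.le)) *
            D * ((U.submatrix id (Fin.castLE hn'.le))ᵀ * B))) ∧
    (∀ D : Matrix (Fin n') (Fin n') ℝ, Dᵀ = ε • D →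
      (∀ D' : Matrix (Fin n') (Fin n') ℝ, D'ᵀ = ε • D' →
        frob2 ((U.submatrix id (Fin.castLE hn'.le))ᵀ * C -
            ((U.submatrix id (Fin.castLE hn'.le))ᵀ * A * U.submatrix id (Fin.castLE hn'.le)) *
              D * ((U.submatrix id (Fin.castLE hn'.le))ᵀ * B)) ≤
          frob2 ((U.submatrix id (Fin.castLE hn'.le))ᵀ * C -
            ((U.submatrix id (Fin.castLE hn'.le))ᵀ * A * U.submatrix id (Fin.castLE hn'.le)) *
              D' * ((U.submatrix id (Fin.castLE hn'.le))ᵀ * B))) →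
      D = Dh.submatrix (Fin.castLE hn'.le) (Fin.castLE hn'.le)) := by
  have hle : n' ≤ n := hn'.le
  set c : Fin n' → Fin n := Fin.castLE hle with hc
  set Ah : Matrix (Fin n) (Fin n) ℝ := Uᵀ * A * U with hAh
  set Bh : Matrix (Fin n) (Fin ns) ℝ := Uᵀ * B with hBh
  set Ch : Matrix (Fin n) (Fin ns) ℝ := Uᵀ * C with hCh
  -- submatrix identities for the truncated data
  have hU'T : (U.submatrix id c)ᵀ = Uᵀ.submatrix c id := Matrix.transpose_submatrix U id c
  have hB' : (U.submatrix id c)ᵀ * B = Bh.submatrix c id := by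
    rw [hU'T, hBh]
    rw [Matrix.submatrix_mul Uᵀ B c id id Function.bijective_id, Matrix.submatrix_id_id]
  have hC' : (U.submatrix id c)ᵀ * C = Ch.submatrix c id := by
    rw [hU'T, hCh]
    rw [Matrix.submatrix_mul Uᵀ C c id id Function.bijective_id, Matrix.submatrix_id_id]
  have hA' : (U.submatrix id c)ᵀ * A * U.submatrix id c = Ah.submatrix c c := by
    rw [hU'T, hAh]
    rw [Matrix.submatrix_mul (Uᵀ * A) U c id c Function.bijective_id,
        Matrix.submatrix_mul Uᵀ A c id id Function.bijective_id, Matrix.submatrix_id_id]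
  have hcinj : Function.Injective c := Fin.castLE_injective hle
  have hA'diag : (Ah.submatrix c c).IsDiag := fun i j hij =>
    hAdiag (fun h => hij (hcinj h))
  have hBB' : (Bh.submatrix c id) * (Bh.submatrix c id)ᵀ = (Bh * Bhᵀ).submatrix c c := by
    rw [Matrix.transpose_submatrix, Matrix.submatrix_mul Bh Bhᵀ c id c Function.bijective_id]
  have hCB' : (Ch.submatrix c id) * (Bh.submatrix c id)ᵀ = (Ch * Bhᵀ).submatrix c c := by
    rw [Matrix.transpose_submatrix, Matrix.submatrix_mul Ch Bhᵀ c id c Function.bijective_id]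
  have hBB'diag : ((Bh.submatrix c id) * (Bh.submatrix c id)ᵀ).IsDiag := by
    rw [hBB']
    exact fun i j hij => hBdiag (fun h => hij (hcinj h))
  -- entrywise objective
  set h : Fin n → Fin n → ℝ → ℝ := fun i j x =>
    (Ah i i) ^ 2 * (Bh * Bhᵀ) j j * x ^ 2 - 2 * Ah i i * (Ch * Bhᵀ) i j * x with hdefh
  have hfull : ∀ D : Matrix (Fin n) (Fin n) ℝ,
      frob2 (Ch - Ah * D * Bh) = frob2 Ch + ∑ i, ∑ j, h i j (D i j) :=
    fun D => expand_frob Ah hAdiag Bh hBdiag Ch D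
  have htrunc : ∀ D : Matrix (Fin n') (Fin n') ℝ,
      frob2 (Ch.submatrix c id - (Ah.submatrix c c) * D * (Bh.submatrix c id)) =
        frob2 (Ch.submatrix c id) + ∑ i, ∑ j, h (c i) (c j) (D i j) := by
    intro D
    rw [expand_frob (Ah.submatrix c c) hA'diag (Bh.submatrix c id) hBB'diag
      (Ch.submatrix c id) D]
    congr 1
    all_goals
      refine Finset.sum_congr rfl fun i _ => Finset.sum_congr rfl fun j _ => ?_
      rw [hBB', hCB']
      rfl
  -- the extension of a small matrix by Dh
  set ext : Matrix (Fin n') (Fin n') ℝ → Matrix (Fin n) (Fin n) ℝ := fun D i j =>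
    if hij : (i : ℕ) < n' ∧ (j : ℕ) < n' then D ⟨i, hij.1⟩ ⟨j, hij.2⟩ else Dh i j with hext
  have hext_block : ∀ (D : Matrix (Fin n') (Fin n') ℝ) (i j : Fin n'),
      ext D (c i) (c j) = D i j := by
    intro D i j
    have h1 : ext D (c i) (c j) = D ⟨(c i).1, i.2⟩ ⟨(c j).1, j.2⟩ := dif_pos ⟨i.2, j.2⟩
    rw [h1]
    exact congr_arg₂ D (Fin.ext rfl) (Fin.ext rfl)
  have hext_off : ∀ (D : Matrix (Fin n') (Fin n') ℝ) (i j : Fin n),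
      ¬((i : ℕ) < n' ∧ (j : ℕ) < n') → ext D i j = Dh i j := by
    intro D i j hij
    simp only [hext, dif_neg hij]
  have hDsym' : ∀ i j : Fin n, Dh j i = ε * Dh i j := by
    intro i j
    have := congrFun (congrFun hDsym i) j
    simpa [Matrix.transpose_apply, Matrix.smul_apply, smul_eq_mul] using this
  have hext_sym : ∀ D : Matrix (Fin n') (Fin n') ℝ, Dᵀ = ε • D → (ext D)ᵀ = ε • ext D := by
    intro D hD
    have hD' : ∀ i j : Fin n', D j i = ε * D i j := by
      intro i j
      have := congrFun (congrFun hD i) j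
      simpa [Matrix.transpose_apply, Matrix.smul_apply, smul_eq_mul] using this
    ext i j
    simp only [Matrix.transpose_apply, Matrix.smul_apply, smul_eq_mul]
    by_cases hij : (i : ℕ) < n' ∧ (j : ℕ) < n'
    · have hji : (j : ℕ) < n' ∧ (i : ℕ) < n' := ⟨hij.2, hij.1⟩
      simp only [hext, dif_pos hij, dif_pos hji]
      exact hD' ⟨i, hij.1⟩ ⟨j, hij.2⟩
    · have hji : ¬((j : ℕ) < n' ∧ (i : ℕ) < n') := fun hh => hij ⟨hh.2, hh.1⟩
      simp only [hext, dif_neg hij, dif_neg hji]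
      exact hDsym' i j
  -- block sum identity: for small D,
  have hdiff : ∀ D : Matrix (Fin n') (Fin n') ℝ,
      frob2 (Ch - Ah * ext D * Bh) - frob2 (Ch - Ah * Dh * Bh) =
        (frob2 (Ch.submatrix c id - (Ah.submatrix c c) * D * (Bh.submatrix c id)) -
          frob2 (Ch.submatrix c id - (Ah.submatrix c c) *
            (Dh.submatrix c c) * (Bh.submatrix c id))) := by
    intro D
    rw [hfull, hfull, htrunc, htrunc]
    have : (frob2 Ch + ∑ i, ∑ j, h i j (ext D i j)) - (frob2 Ch + ∑ i, ∑ j, h i j (Dh i j))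
        = (∑ i, ∑ j, h i j (ext D i j)) - (∑ i, ∑ j, h i j (Dh i j)) := by ring
    rw [this]
    rw [sum_diff_block hle (fun i j => h i j (ext D i j)) (fun i j => h i j (Dh i j))
      (fun i j hij => by exact congrArg (h i j) (hext_off D i j hij))]
    simp only [← hc]
    have : (frob2 (Ch.submatrix c id) + ∑ i, ∑ j, h (c i) (c j) (D i j)) -
        (frob2 (Ch.submatrix c id) + ∑ i, ∑ j, h (c i) (c j) ((Dh.submatrix c c) i j))
        = (∑ i, ∑ j, h (c i) (c j) (D i j)) -
          (∑ i, ∑ j, h (c i) (c j) (Dh (c i) (c j))) := by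
      simp only [Matrix.submatrix_apply]; ring
    rw [this, ← Finset.sum_sub_distrib]
    refine Finset.sum_congr rfl fun i _ => ?_
    rw [← Finset.sum_sub_distrib]
    refine Finset.sum_congr rfl fun j _ => ?_
    rw [hext_block]
  -- Part 1: symmetry of the block
  have part1 : (Dh.submatrix c c)ᵀ = ε • Dh.submatrix c c := by
    ext i j
    simp only [Matrix.transpose_apply, Matrix.smul_apply, Matrix.submatrix_apply, smul_eq_mul]
    exact hDsym' (c i) (c j)
  -- Part 2: minimality of the block
  have part2 : ∀ D : Matrix (Fin n') (Fin n') ℝ, Dᵀ = ε • D →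
      frob2 (Ch.submatrix c id - (Ah.submatrix c c) * (Dh.submatrix c c) * (Bh.submatrix c id)) ≤
      frob2 (Ch.submatrix c id - (Ah.submatrix c c) * D * (Bh.submatrix c id)) := by
    intro D hD
    have := hDmin (ext D) (hext_sym D hD)
    have hd := hdiff D
    linarith
  refine ⟨part1, ?_, ?_⟩
  · intro D hD
    have := part2 D hD
    rwa [hA', hB', hC']
  -- Part 3: uniqueness
  · intro D hD hmin
    have hmin' : ∀ D' : Matrix (Fin n') (Fin n') ℝ, D'ᵀ = ε • D' →
        frob2 (Ch.submatrix c id - (Ah.submatrix c c) * D * (Bh.submatrix c id)) ≤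
        frob2 (Ch.submatrix c id - (Ah.submatrix c c) * D' * (Bh.submatrix c id)) := by
      intro D' hD'
      have := hmin D' hD'
      rwa [hA', hB', hC'] at this
    -- show ext D is a global minimizer
    have hglobal : ∀ D' : Matrix (Fin n) (Fin n) ℝ, D'ᵀ = ε • D' →
        frob2 (Ch - Ah * ext D * Bh) ≤ frob2 (Ch - Ah * D' * Bh) := by
      intro D' hD'sym
      have hD'e : ∀ i j : Fin n, D' j i = ε * D' i j := by
        intro i j
        have := congrFun (congrFun hD'sym i) j
        simpa [Matrix.transpose_apply, Matrix.smul_apply, smul_eq_mul] using this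
      -- block of D'
      set Db : Matrix (Fin n') (Fin n') ℝ := D'.submatrix c c with hDb
      have hDbsym : Dbᵀ = ε • Db := by
        ext i j
        simp only [Matrix.transpose_apply, Matrix.smul_apply, Matrix.submatrix_apply,
          smul_eq_mul, hDb]
        exact hD'e (c i) (c j)
      -- W = ext Db
      -- V = Dh on block, D' off block
      set V : Matrix (Fin n) (Fin n) ℝ := fun i j =>
        if (i : ℕ) < n' ∧ (j : ℕ) < n' then Dh i j else D' i j with hV
      have hVsym : Vᵀ = ε • V := by
        ext i j
        simp only [Matrix.transpose_apply, Matrix.smul_apply, smul_eq_mul, hV]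
        by_cases hij : (i : ℕ) < n' ∧ (j : ℕ) < n'
        · have hji : (j : ℕ) < n' ∧ (i : ℕ) < n' := ⟨hij.2, hij.1⟩
          show (if (j : ℕ) < n' ∧ (i : ℕ) < n' then Dh j i else D' j i) = ε * (if (i : ℕ) < n' ∧ (j : ℕ) < n' then Dh i j else D' i j); simp only [if_pos hij, if_pos hji]
          exact hDsym' i j
        · have hji : ¬((j : ℕ) < n' ∧ (i : ℕ) < n') := fun hh => hij ⟨hh.2, hh.1⟩
          show (if (j : ℕ) < n' ∧ (i : ℕ) < n' then Dh j i else D' j i) = ε * (if (i : ℕ) < n' ∧ (j : ℕ) < n' then Dh i j else D' i j); simp only [if_neg hij, if_neg hji]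
          exact hD'e i j
      -- step A : f(W) ≤ f(D') + (f(Dh) - f(V)) ≤ f(D')  via entrywise identity
      have hident : (∑ i, ∑ j, h i j (D' i j)) - (∑ i, ∑ j, h i j (ext Db i j)) =
          (∑ i, ∑ j, h i j (V i j)) - (∑ i, ∑ j, h i j (Dh i j)) := by
        rw [← Finset.sum_sub_distrib, ← Finset.sum_sub_distrib]
        refine Finset.sum_congr rfl fun i _ => ?_
        rw [← Finset.sum_sub_distrib, ← Finset.sum_sub_distrib]
        refine Finset.sum_congr rfl fun j _ => ?_
        by_cases hij : (i : ℕ) < n' ∧ (j : ℕ) < n'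
        · have h1 : ext Db i j = D' i j := by
            simp only [hext, dif_pos hij, hDb, Matrix.submatrix_apply]
            congr 1 <;> exact Fin.ext rfl
          have h2 : V i j = Dh i j := by simp only [hV, if_pos hij]
          rw [h1, h2, sub_self, sub_self]
        · have h1 : ext Db i j = Dh i j := hext_off Db i j hij
          have h2 : V i j = D' i j := by simp only [hV, if_neg hij]
          rw [h1, h2]
      have hVmin := hDmin V hVsym
      -- f(D') - f(W) = f(V) - f(Dh) ≥ 0
      have hstepA : frob2 (Ch - Ah * ext Db * Bh) ≤ frob2 (Ch - Ah * D' * Bh) := by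
        rw [hfull (ext Db), hfull D']
        rw [hfull V, hfull Dh] at hVmin
        linarith [hident]
      -- step B : f(ext D) ≤ f(ext Db) since D minimizes the truncated problem
      have hstepB : frob2 (Ch - Ah * ext D * Bh) ≤ frob2 (Ch - Ah * ext Db * Bh) := by
        have h1 := hdiff D
        have h2 := hdiff Db
        have h3 := hmin' Db hDbsym
        linarith
      linarith
    have := hDuniq (ext D) (hext_sym D hD) hglobal
    -- conclude D = Dh block
    ext i j
    rw [Matrix.submatrix_apply, ← this, hext_block]
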